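/- For every countable linear order X, there exists an order-preserving injection (order embedding) f from X into the rationals ℚ such that the image of f is a closed subset of ℚ (with respect to the usual topology on ℚ). -/

import Mathlib

noncomputable section
namespace Stmt0Aux

def qe : ℕ ≃ ℚ := (Denumerable.eqv ℚ).symm

def c (n : ℕ) : ℝ := (1/2 : ℝ) ^ (n ^ 2)

lemma c_pos (n : ℕ) : 0 < c n := pow_pos (by norm_num) _

lemma c_le (n : ℕ) : c n ≤ (1/2 : ℝ) ^ n := by
  apply pow_le_pow_of_le_one (by norm_num) (by norm_num)
  nlinarith [Nat.le_of_lt_succ (Nat.lt_succ_of_le (le_refl n))]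

lemma summable_c : Summable c :=
  (summable_geometric_of_lt_one (by norm_num) (by norm_num)).of_nonneg_of_le
    (fun n => (c_pos n).le) c_le

def Phi (b : ℕ → Bool) : ℝ := ∑' n, if b n then c n else 0

lemma summable_phi (b : ℕ → Bool) : Summable (fun n => if b n then c n else 0) :=
  summable_c.of_nonneg_of_le (fun n => by split <;> simp [(c_pos n).le])
    (fun n => by split <;> simp [(c_pos n).le])

lemma phi_continuous : Continuous Phi := by
  apply continuous_tsum (u := c) (fun i => ?_) summable_c (fun i b => ?_)
  · exact (continuous_of_discreteTopology (f := fun t : Bool => if t then c i else 0)).comp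
      (continuous_apply i)
  · rw [Real.norm_eq_abs]
    split <;> simp [abs_of_nonneg (c_pos i).le, (c_pos i).le]

/-- lower endpoint -/
def s (q : ℚ) : ℝ := Phi (fun n => decide (qe n < q))
/-- upper endpoint -/
def t (q : ℚ) : ℝ := Phi (fun n => decide (qe n ≤ q))

lemma t_eq (q : ℚ) : t q = s q + c (qe.symm q) := by
  have h : (fun n => if decide (qe n ≤ q) = true then c n else 0)
      = fun n => (if decide (qe n < q) = true then c n else 0)
        + (if n = qe.symm q then c n else 0) := by
    funext n
    by_cases hq : qe n = q
    · have hn : n = qe.symm q := by simp [← hq]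
      simp [hq, hn, le_refl, lt_irrefl]
    · have hn : n ≠ qe.symm q := fun h => hq (by simp [h])
      by_cases hlt : qe n < q
      · simp [hlt, hlt.le, hn]
      · have : ¬ qe n ≤ q := fun h => hlt (lt_of_le_of_ne h hq)
        simp [hlt, this, hn]
  rw [t, s, Phi, Phi, h, Summable.tsum_add (summable_phi _)
      (by simpa using (summable_phi (fun n => decide (n = qe.symm q))))]
  congr 1
  rw [show (fun n => if n = qe.symm q then c n else 0)
      = (fun n => if n = qe.symm q then c (qe.symm q) else 0) from
    funext fun n => by split <;> simp_all]
  exact tsum_ite_eq _ _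

lemma s_lt_t (q : ℚ) : s q < t q := by
  rw [t_eq]; linarith [c_pos (qe.symm q)]

lemma t_le_s {q q' : ℚ} (h : q < q') : t q ≤ s q' := by
  apply Summable.tsum_le_tsum _ (summable_phi _) (summable_phi _)
  intro n
  by_cases hlt : qe n < q'
  · by_cases hle : qe n ≤ q <;> simp [hle, hlt, le_refl, (c_pos n).le]
  · have hle : ¬ qe n ≤ q := fun hle => hlt (hle.trans_lt h)
    simp [hle, hlt, le_refl]

/-- the chosen rational strictly inside `(s q, t q)` -/
def F (q : ℚ) : ℚ := (exists_rat_btwn (s_lt_t q)).choose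

lemma s_lt_F (q : ℚ) : s q < (F q : ℝ) := (exists_rat_btwn (s_lt_t q)).choose_spec.1
lemma F_lt_t (q : ℚ) : (F q : ℝ) < t q := (exists_rat_btwn (s_lt_t q)).choose_spec.2

lemma F_strictMono : StrictMono F := by
  intro q q' h
  have : (F q : ℝ) < (F q' : ℝ) := (F_lt_t q).trans_le ((t_le_s h).trans (s_lt_F q').le)
  exact_mod_cast this

lemma irrational_phi (b : ℕ → Bool) (hb : {n | b n = true}.Infinite) :
    Irrational (Phi b) := by
  rintro ⟨a, ha⟩
  set f : ℕ → ℝ := fun n => if b n then c n else 0 with hf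
  have hfnn : ∀ m, 0 ≤ f m := fun m => by simp only [hf]; split <;> simp [(c_pos m).le]
  set n := a.den with hn
  have hd : 0 < a.den := a.pos
  -- the tail
  set T : ℝ := ∑' i, f (i + (n+1)) with hT
  have hsumT : Summable (fun i => f (i + (n+1))) :=
    (summable_nat_add_iff (n+1)).2 (summable_phi b)
  have hsplit : (∑ i ∈ Finset.range (n+1), f i) + T = Phi b :=
    Summable.sum_add_tsum_nat_add (n+1) (summable_phi b)
  -- tail is positive
  obtain ⟨m, hm, hmn⟩ := hb.exists_gt n
  have hTpos : 0 < T := by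
    have : 0 < f ((m - (n+1)) + (n+1)) := by
      rw [Nat.sub_add_cancel (by omega)]
      simp only [hf, Set.mem_setOf_eq.mp hm, if_true]
      exact c_pos m
    exact Summable.tsum_pos hsumT (fun i => hfnn _) _ this
  -- tail is small
  set ρ : ℝ := (1/2 : ℝ) ^ (n+1) with hρ
  have hρ0 : 0 ≤ ρ := by positivity
  have hρ1 : ρ ≤ 1/2 := by
    rw [hρ]
    calc (1/2:ℝ)^(n+1) ≤ (1/2:ℝ)^1 := by
          apply pow_le_pow_of_le_one (by norm_num) (by norm_num); omega
      _ = 1/2 := pow_one _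
  have hgeom : Summable (fun i : ℕ => ρ ^ (i + (n+1))) := by
    simp_rw [pow_add]
    exact (summable_geometric_of_lt_one hρ0 (by linarith)).mul_right _
  have hTle : T ≤ 2 * (1/2:ℝ) ^ ((n+1)^2) := by
    have h1 : T ≤ ∑' i : ℕ, ρ ^ (i + (n+1)) := by
      apply Summable.tsum_le_tsum _ hsumT hgeom
      intro i
      have h2 : f (i + (n+1)) ≤ c (i + (n+1)) := by
        simp only [hf]; split <;> simp [(c_pos _).le]
      refine h2.trans ?_
      rw [hρ, ← pow_mul]
      apply pow_le_pow_of_le_one (by norm_num) (by norm_num)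
      have : (n+1) * (i + (n+1)) ≤ (i + (n+1))^2 := by nlinarith
      calc (n+1) * (i + (n+1)) ≤ (i + (n+1))^2 := this
        _ = (i + (n+1))^2 := rfl
    have h3 : ∑' i : ℕ, ρ ^ (i + (n+1)) = (1 - ρ)⁻¹ * ρ ^ (n+1) := by
      simp_rw [pow_add]
      rw [tsum_mul_right, tsum_geometric_of_lt_one hρ0 (by linarith)]
    have h4 : (1 - ρ)⁻¹ ≤ 2 := by
      rw [inv_le_comm₀ (by linarith) (by norm_num)]
      linarith
    have h5 : ρ ^ (n+1) = (1/2:ℝ) ^ ((n+1)^2) := by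
      rw [hρ, ← pow_mul, sq]
    calc T ≤ (1 - ρ)⁻¹ * ρ ^ (n+1) := h1.trans_eq h3
      _ ≤ 2 * ρ ^ (n+1) := by
          apply mul_le_mul_of_nonneg_right h4 (by positivity)
      _ = 2 * (1/2:ℝ) ^ ((n+1)^2) := by rw [h5]
  -- integer identity
  set A : ℤ := ∑ m ∈ Finset.range (n+1), (if b m then (2:ℤ)^(n^2 - m^2) else 0) with hA
  have hAcast : (A : ℝ) = 2^(n^2) * ∑ m ∈ Finset.range (n+1), f m := by
    rw [hA, Finset.mul_sum]
    push_cast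
    apply Finset.sum_congr rfl
    intro m hm'
    have hm2 : m^2 ≤ n^2 := Nat.pow_le_pow_left (Nat.lt_succ_iff.mp (Finset.mem_range.mp hm')) 2
    simp only [hf]
    split
    · rw [c, one_div, inv_pow, eq_comm, mul_inv_eq_iff_eq_mul₀ (by positivity),
        ← pow_add, Nat.sub_add_cancel hm2]
    · simp
  -- the contradiction
  have hnum : (a.num : ℝ) = Phi b * a.den := by
    rw [ha.symm, Rat.cast_def]
    field_simp
  set K : ℤ := a.num * 2^(n^2) - a.den * A with hK
  have hKcast : (K : ℝ) = (a.den : ℝ) * 2^(n^2) * T := by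
    rw [hK]
    push_cast
    rw [hnum, hAcast, ← hsplit]
    ring
  have hK0 : 0 < K := by
    have : (0:ℝ) < (K:ℝ) := by
      rw [hKcast]
      have : (0:ℝ) < (a.den:ℝ) := by exact_mod_cast hd
      positivity
    exact_mod_cast this
  have hK1 : K < 1 := by
    have h6 : (K:ℝ) ≤ (a.den : ℝ) * 2^(n^2) * (2 * (1/2:ℝ) ^ ((n+1)^2)) := by
      rw [hKcast]
      apply mul_le_mul_of_nonneg_left hTle (by positivity)
    have h7 : (a.den : ℝ) * 2^(n^2) * (2 * (1/2:ℝ) ^ ((n+1)^2))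
        = (a.den : ℝ) * ((1/4 : ℝ) ^ n) := by
      have : (n+1)^2 = n^2 + (2*n + 1) := by ring
      rw [this, pow_add]
      have h8 : (2:ℝ)^(n^2) * (1/2:ℝ)^(n^2) = 1 := by
        rw [← mul_pow]; norm_num
      have h9 : (1/2:ℝ)^(2*n+1) = (1/4:ℝ)^n * (1/2) := by
        rw [pow_add, pow_mul, pow_one]; norm_num
      calc (a.den : ℝ) * 2^(n^2) * (2 * ((1/2:ℝ)^(n^2) * (1/2:ℝ)^(2*n+1)))
          = (a.den : ℝ) * ((2:ℝ)^(n^2) * (1/2:ℝ)^(n^2)) * (2 * (1/2:ℝ)^(2*n+1)) := by ring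
        _ = (a.den : ℝ) * (2 * ((1/4:ℝ)^n * (1/2))) := by rw [h8, h9]; ring
        _ = (a.den : ℝ) * ((1/4 : ℝ) ^ n) := by ring
    have h10 : (a.den : ℝ) * ((1/4 : ℝ) ^ n) < 1 := by
      have hlt : (a.den : ℕ) < 4^n := by
        calc a.den < 2^n := by rw [hn]; exact Nat.lt_two_pow_self
          _ ≤ 4^n := Nat.pow_le_pow_left (by norm_num) n
      have hlt' : (a.den : ℝ) < (4:ℝ)^n := by exact_mod_cast hlt
      have h11 : (1/4:ℝ)^n = ((4:ℝ)^n)⁻¹ := by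
        rw [one_div, inv_pow]
      rw [h11, mul_inv_lt_iff₀ (by positivity)]
      linarith
    have : (K:ℝ) < 1 := lt_of_le_of_lt (h6.trans_eq h7) h10
    exact_mod_cast this
  omega

lemma F_lt' (q : ℚ) : (F q : ℝ) < s q + c (qe.symm q) := by
  rw [← t_eq]; exact F_lt_t q

lemma s_def (q : ℚ) : s q = Phi (fun n => decide (qe n < q)) := rfl

end Stmt0Aux

open Stmt0Aux

/-- For every countable linear order `X`, there exists an order embedding
`f : X ↪o ℚ` whose image is a closed subset of `ℚ` (usual topology on `ℚ`). -/
theorem stmt_0 (X : Type*) [LinearOrder X] [Countable X] :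
    ∃ f : X ↪o ℚ, IsClosed (Set.range f) := by
  classical
  obtain ⟨g₀⟩ : Nonempty (X ↪o ℚ) := Order.embedding_from_countable_to_dense X ℚ
  let iso := orderIsoIooNegOneOne ℚ
  let g : X ↪o ℚ := (g₀.trans iso.toOrderEmbedding).trans
    (OrderEmbedding.subtype (· ∈ Set.Ioo (-1 : ℚ) 1))
  have hg : ∀ x, (-1 : ℚ) < g x := fun x => (iso (g₀ x)).2.1
  set G : Set ℚ := Set.range (⇑g) with hG
  refine ⟨OrderEmbedding.ofStrictMono (fun x => F (g x))
      (fun a b h => F_strictMono (g.strictMono h)), ?_⟩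
  set f : X ↪o ℚ := OrderEmbedding.ofStrictMono (fun x => F (g x))
      (fun a b h => F_strictMono (g.strictMono h)) with hf
  rw [← closure_subset_iff_isClosed]
  intro cq hc
  by_contra hcr
  set y : ℝ := (cq : ℝ) with hy
  have hrange : (fun q : ℚ => (q : ℝ)) '' Set.range ⇑f
      = (fun q : ℚ => ((F q : ℝ))) '' G := by
    have h1 : Set.range ⇑f = F '' G := by
      rw [hG, ← Set.range_comp]
      rfl
    rw [h1, Set.image_image]
  have hyclos : y ∈ closure ((fun q : ℚ => ((F q : ℝ))) '' G) := by
    have h2 := Rat.isUniformEmbedding_coe_real.isEmbedding.closure_eq_preimage_closure_image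
      (Set.range ⇑f)
    rw [h2] at hc
    rw [← hrange]
    exact hc
  -- Step A: for every ε, infinitely many q ∈ G have F q within ε of y
  have key : ∀ ε : ℝ, 0 < ε → {q : ℚ | q ∈ G ∧ dist ((F q : ℝ)) y < ε}.Infinite := by
    intro ε hε
    by_contra hfin
    rw [Set.not_infinite] at hfin
    set P : Set ℝ := (fun q : ℚ => ((F q : ℝ))) '' {q : ℚ | q ∈ G ∧ dist ((F q : ℝ)) y < ε}
      with hP
    have hPfin : P.Finite := hfin.image _
    have hyP : y ∉ P := by
      rintro ⟨q, hq, hFq⟩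
      apply hcr
      obtain ⟨x, hx⟩ := hq.1
      refine ⟨x, ?_⟩
      have h3 : (F q : ℝ) = (cq : ℝ) := hFq
      have h4 : F q = cq := by exact_mod_cast h3
      show F (g x) = cq
      rw [hx, h4]
    obtain ⟨δ, hδ0, hδ⟩ := Metric.isOpen_iff.mp hPfin.isClosed.isOpen_compl y hyP
    obtain ⟨z, hzE, hzd⟩ := Metric.mem_closure_iff.mp hyclos (min δ ε) (lt_min hδ0 hε)
    obtain ⟨q, hqG, rfl⟩ := hzE
    have h5 : dist ((F q : ℝ)) y < ε := by
      rw [dist_comm]; exact hzd.trans_le (min_le_right _ _)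
    have h6 : ((F q : ℝ)) ∈ P := ⟨q, ⟨hqG, h5⟩, rfl⟩
    exact hδ (show ((F q:ℝ)) ∈ Metric.ball y δ by
      rw [Metric.mem_ball, dist_comm]; exact hzd.trans_le (min_le_left _ _)) h6
  -- Step B: y is in the closure of the corresponding lower endpoints
  have hyS : y ∈ closure ((fun q : ℚ => s q) '' G) := by
    rw [Metric.mem_closure_iff]
    intro ε hε
    obtain ⟨N, hN⟩ := exists_pow_lt_of_lt_one (half_pos hε) (show (1/2:ℝ) < 1 by norm_num)
    have hinf := (key (ε/2) (half_pos hε)).image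
      ((Equiv.injective qe.symm).injOn (s := {q : ℚ | q ∈ G ∧ dist ((F q : ℝ)) y < ε/2}))
    obtain ⟨nn, hnnmem, hnnN⟩ := hinf.exists_gt N
    obtain ⟨q, hqmem, hqe⟩ := hnnmem
    refine ⟨s q, ⟨q, hqmem.1, rfl⟩, ?_⟩
    have hFs : dist ((F q : ℝ)) (s q) ≤ c (qe.symm q) := by
      rw [Real.dist_eq, abs_of_pos (by linarith [s_lt_F q])]
      linarith [F_lt' q]
    have hcN : c (qe.symm q) < ε/2 := by
      have h7 : c (qe.symm q) ≤ (1/2 : ℝ) ^ (qe.symm q : ℕ) := c_le _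
      have h8 : ((1/2 : ℝ)) ^ (qe.symm q : ℕ) ≤ (1/2 : ℝ) ^ N := by
        apply pow_le_pow_of_le_one (by norm_num) (by norm_num)
        rw [hqe]; exact hnnN.le
      linarith
    calc dist y (s q) ≤ dist y ((F q : ℝ)) + dist ((F q : ℝ)) (s q) := dist_triangle _ _ _
      _ < ε/2 + ε/2 := by
          have h11 : dist y ((F q : ℝ)) < ε/2 := by rw [dist_comm]; exact hqmem.2
          linarith
      _ = ε := by ring
  -- Step C: compactness
  set C : Set (ℕ → Bool) := {b | ∀ m : ℕ, qe m ≤ -1 → b m = true} with hC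
  have hSSsub : (fun q : ℚ => s q) '' G ⊆ Phi '' C := by
    rintro _ ⟨q, hq, rfl⟩
    refine ⟨fun m => decide (qe m < q), fun m hm => ?_, (s_def q).symm⟩
    obtain ⟨x, hx⟩ := hq
    have : (-1 : ℚ) < q := hx ▸ hg x
    simp only [decide_eq_true_eq]
    exact hm.trans_lt this
  have hCcl : IsClosed C := by
    have h9 : C = ⋂ (m : ℕ) (_ : qe m ≤ -1), (fun b : ℕ → Bool => b m) ⁻¹' {true} := by
      ext b; simp [hC]
    rw [h9]
    exact isClosed_iInter fun m => isClosed_iInter fun _ =>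
      (isClosed_discrete _).preimage (continuous_apply m)
  have hPhiC : IsClosed (Phi '' C) := (hCcl.isCompact.image phi_continuous).isClosed
  have hyPhi : y ∈ Phi '' C := by
    have := closure_mono hSSsub hyS
    rwa [hPhiC.closure_eq] at this
  obtain ⟨b, hbC, hby⟩ := hyPhi
  have hbinf : {m | b m = true}.Infinite := by
    apply Set.Infinite.mono (s := {m : ℕ | qe m ≤ -1}) _ ?_
    · intro m hm; exact hbC m hm
    · have h10 : {m : ℕ | qe m ≤ -1} = ⇑qe ⁻¹' (Set.Iic (-1)) := rfl
      rw [h10]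
      exact (Set.Iic_infinite _).preimage (by simp [Equiv.range_eq_univ])
  exact irrational_phi b hbinf ⟨cq, hby.symm⟩
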